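/- Let x_1, …, x_N be i.i.d. random variables on X whose common law is invariant under a finite group G', and let A ⊆ X be measurable such that g·A ∩ A = ∅ for all g ∈ G' \ {e} and p := P(x ∈ ∪_{g∈G'} g·A) > 0. Define the group-averaged empirical estimator p̂ = (1/(|G'| N)) Σ_{i=1}^N Σ_{g∈G'} 1_A(g·x_i). Then E[p̂] = P(x ∈ A) = p/|G'| and Var(p̂) = p(1−p)/(|G'|² N). -/

import Mathlib

open MeasureTheory Pointwise ProbabilityTheory

/-- For an i.i.d. sample with `G'`-invariant common law and a
set `A` whose translates are pairwise disjoint, the group-averaged empirical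
estimator `p̂ = (1/(|G'| N)) ∑_i ∑_g 1_A(g • x_i)` is unbiased for `P(x ∈ A)`
(which equals `p/|G'|` with `p = P(x ∈ ∪_g g•A)`) and
`Var(p̂) = p(1−p)/(|G'|² N)`. -/
theorem group_averaged_empirical_estimator
    {G' : Type*} [Group G'] [Fintype G']
    {X : Type*} [MeasurableSpace X] [MulAction G' X]
    {Ω : Type*} [MeasurableSpace Ω]
    (P : Measure Ω) [IsProbabilityMeasure P]
    {N : ℕ} (hN : 0 < N)
    (x : Fin N → Ω → X)
    (hmeas : ∀ i, Measurable (x i))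
    (hindep : iIndepFun x P)
    (ν : Measure X) [IsProbabilityMeasure ν]
    (hid : ∀ i, P.map (x i) = ν)
    (hsmul : ∀ g : G', Measurable (fun a : X => g • a))
    (hν : ∀ g : G', ν.map (fun a : X => g • a) = ν)
    (A : Set X) (hA : MeasurableSet A)
    (hdisj : ∀ g : G', g ≠ 1 → g • A ∩ A = ∅)
    (hp : 0 < (ν (⋃ g : G', g • A)).toReal) :
    let n : ℝ := Fintype.card G'
    let p : ℝ := (ν (⋃ g : G', g • A)).toReal
    let phat : Ω → ℝ := fun ω =>
      (1 / (n * N)) * ∑ i : Fin N, ∑ g : G',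
        A.indicator (fun _ => (1 : ℝ)) (g • x i ω)
    (∫ ω, phat ω ∂P = (ν A).toReal)
    ∧ (ν A).toReal = p / n
    ∧ variance phat P = p * (1 - p) / (n ^ 2 * N) := by
  classical
  intro n p phat
  set B : Set X := ⋃ g : G', g • A with hBdef
  -- pairwise disjointness of translates
  have hpair : ∀ a b : G', a ≠ b → Disjoint (a • A) (b • A) := by
    intro a b hab
    rw [Set.disjoint_iff_inter_eq_empty]
    have h1 : (b⁻¹ * a) • A ∩ A = ∅ := hdisj _ (by
      intro h; apply hab; rwa [inv_mul_eq_one, eq_comm] at h)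
    have := congrArg (fun s => b • s) h1
    simpa [Set.smul_set_inter, smul_smul, mul_inv_cancel_left] using this
  -- translates are measurable
  have hmA : ∀ g : G', MeasurableSet (g • A) := by
    intro g
    have : g • A = (fun y : X => g⁻¹ • y) ⁻¹' A := by
      ext y
      simp [Set.mem_smul_set_iff_inv_smul_mem, Set.mem_preimage]
    rw [this]; exact (hsmul g⁻¹) hA
  have hmB : MeasurableSet B := MeasurableSet.iUnion fun g => hmA g
  -- translates have the same measure
  have hνg : ∀ g : G', ν (g • A) = ν A := by
    intro g
    have h1 : ν.map (fun a : X => g • a) = ν := hν g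
    calc ν (g • A) = ν.map (fun a : X => g • a) (g • A) := by rw [h1]
      _ = ν ((fun y : X => g • y) ⁻¹' (g • A)) := Measure.map_apply (hsmul g) (hmA g)
      _ = ν A := by
          congr 1
          ext y
          simp [Set.mem_preimage, Set.mem_smul_set_iff_inv_smul_mem, smul_smul]
  -- the key identity of indicators
  have key : ∀ y : X, (∑ g : G', A.indicator (fun _ => (1 : ℝ)) (g • y))
      = B.indicator (fun _ => (1 : ℝ)) y := by
    intro y
    by_cases hy : y ∈ B
    · obtain ⟨g₀, hys⟩ := Set.mem_iUnion.mp hy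
      rw [Set.indicator_of_mem hy]
      rw [Finset.sum_eq_single g₀⁻¹]
      · rw [Set.indicator_of_mem]
        exact (Set.mem_smul_set_iff_inv_smul_mem).mp hys
      · intro g _ hg
        rw [Set.indicator_of_notMem]
        intro hgy
        have h1 : y ∈ g⁻¹ • A := Set.mem_smul_set_iff_inv_smul_mem.mpr (by simpa using hgy)
        have h2 : g⁻¹ ≠ g₀ := fun h => hg (by rw [← h]; simp)
        exact (hpair _ _ h2).le_bot ⟨h1, hys⟩
      · intro h; exact absurd (Finset.mem_univ _) h
    · rw [Set.indicator_of_notMem hy]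
      apply Finset.sum_eq_zero
      intro g _
      rw [Set.indicator_of_notMem]
      intro hgy
      exact hy (Set.mem_iUnion.mpr ⟨g⁻¹, Set.mem_smul_set_iff_inv_smul_mem.mpr (by simpa using hgy)⟩)
  -- measure of B
  have hcard : (0 : ℝ) < n := by
    have h0 : 0 < Fintype.card G' := Fintype.card_pos
    show (0 : ℝ) < (Fintype.card G' : ℝ)
    exact_mod_cast h0
  have hBsum : ν B = (Fintype.card G' : ENNReal) * ν A := by
    rw [hBdef, measure_iUnion (fun a b hab => hpair a b hab) hmA]
    simp only [hνg]
    rw [tsum_fintype]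
    simp [Finset.card_univ, mul_comm]
  have hνA : (ν A).toReal = p / n := by
    have hfin : ν A ≠ ⊤ := measure_ne_top ν A
    have : p = n * (ν A).toReal := by
      simp only [p, ← hBdef, hBsum, ENNReal.toReal_mul, n]
      simp
    rw [this]
    field_simp
  -- f and its composition
  set f : X → ℝ := B.indicator (fun _ => (1 : ℝ)) with hf
  have hfmeas : Measurable f := (measurable_indicator_const_iff 1).mpr hmB
  have hphat : phat = fun ω => (1 / (n * N)) * ∑ i : Fin N, f (x i ω) := by
    funext ω
    simp only [phat]
    congr 1
    exact Finset.sum_congr rfl fun i _ => key (x i ω)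
  -- expectation of each f (x i)
  have hEf : ∀ i, ∫ ω, f (x i ω) ∂P = p := by
    intro i
    rw [show (∫ ω, f (x i ω) ∂P) = ∫ y, f y ∂(P.map (x i)) from
      (integral_map (hmeas i).aemeasurable hfmeas.aestronglyMeasurable).symm]
    rw [hid i, hf]
    exact integral_indicator_one hmB
  have hmemLp : ∀ i, MemLp (fun ω => f (x i ω)) 2 P := by
    intro i
    have : (fun ω => f (x i ω)) = Set.indicator (x i ⁻¹' B) (fun _ => (1 : ℝ)) := by
      funext ω
      by_cases h : x i ω ∈ B <;> simp [hf, Set.indicator, h]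
    rw [this]
    exact memLp_indicator_const 2 ((hmeas i) hmB) 1 (Or.inr (measure_ne_top P _))
  have hint : ∀ i, Integrable (fun ω => f (x i ω)) P := fun i =>
    ((hmemLp i).integrable one_le_two)
  -- first conjunct
  have hNpos : (0 : ℝ) < N := by exact_mod_cast hN
  have hE : ∫ ω, phat ω ∂P = (ν A).toReal := by
    rw [hphat, integral_const_mul, integral_finset_sum _ (fun i _ => hint i)]
    simp only [hEf, Finset.sum_const, Finset.card_univ, Fintype.card_fin, nsmul_eq_mul]
    rw [hνA]
    field_simp
  refine ⟨hE, hνA, ?_⟩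
  -- variance
  have hf2 : ∀ y : X, f y ^ 2 = f y := by
    intro y
    by_cases h : y ∈ B <;> simp [hf, Set.indicator, h]
  have hvar1 : ∀ i, variance (fun ω => f (x i ω)) P = p - p ^ 2 := by
    intro i
    rw [variance_eq_sub (hmemLp i)]
    have : (fun ω => f (x i ω)) ^ 2 = fun ω => f (x i ω) := by
      funext ω; simp [Pi.pow_apply, hf2]
    rw [show ((fun ω => f (x i ω)) ^ 2) = (fun ω => f (x i ω)) from this, hEf i]
  have hvarsum : variance (fun ω => ∑ i : Fin N, f (x i ω)) P = N * (p - p ^ 2) := by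
    have hpair' : Set.Pairwise (↑(Finset.univ : Finset (Fin N)))
        fun i j => IndepFun (fun ω => f (x i ω)) (fun ω => f (x j ω)) P := by
      intro i _ j _ hij
      exact (hindep.indepFun hij).comp hfmeas hfmeas
    have := IndepFun.variance_sum (μ := P) (X := fun i => fun ω => f (x i ω))
      (s := Finset.univ) (fun i _ => hmemLp i) hpair'
    rw [show (∑ i : Fin N, fun ω => f (x i ω)) = fun ω => ∑ i : Fin N, f (x i ω) by
      funext ω; simp] at this
    rw [this]
    simp [hvar1, Finset.card_univ]
    ring
  rw [hphat]
  have := variance_const_mul (1 / (n * N)) (fun ω => ∑ i : Fin N, f (x i ω)) P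
  rw [this, hvarsum]
  field_simp
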